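/- In a finite aperiodic monoid M (satisfying x^{ω+1} = x^ω) satisfying additionally (xy)^ω(yx)^ω(xy)^ω = (xy)^ω, if e = u^ω and e·w·e = e for some w, then e·w²·e = e; and if e·v·e = e = e·w·e then e·v·w·e = e. -/

import Mathlib

/-- `e` is the omega power of `x`: an idempotent positive power of `x`. In a finite
monoid such an `e` exists and is unique for each `x`. -/
def IsOmegaPow {M : Type*} [Monoid M] (x e : M) : Prop :=
  (∃ n : ℕ, 0 < n ∧ x ^ n = e) ∧ e * e = e

section Aux

variable {M : Type*} [Monoid M]

lemma aux_conj_pow (x y : M) (k : ℕ) : (x * y) ^ (k + 1) = x * (y * x) ^ k * y := by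
  induction k with
  | zero => simp
  | succ k ih =>
      rw [pow_succ', ih, pow_succ']
      simp only [mul_assoc]

lemma aux_stab (Ω : M → M) (hΩ : ∀ x : M, IsOmegaPow x (Ω x))
    (ha : ∀ x : M, Ω x * x = Ω x) (x : M) :
    ∃ N : ℕ, 0 < N ∧ ∀ k, N ≤ k → x ^ k = Ω x := by
  obtain ⟨⟨n, hn, hxn⟩, _⟩ := hΩ x
  refine ⟨n, hn, fun k hk => ?_⟩
  induction k, hk using Nat.le_induction with
  | base => exact hxn
  | succ k hk ih => rw [pow_succ, ih, ha]

lemma aux_mul_omega (Ω : M → M) (hΩ : ∀ x : M, IsOmegaPow x (Ω x))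
    (ha : ∀ x : M, Ω x * x = Ω x) (x : M) : x * Ω x = Ω x := by
  obtain ⟨⟨n, hn, hxn⟩, _⟩ := hΩ x
  rw [← hxn, ← pow_succ', pow_succ, hxn, ha]

lemma aux_pump_left {e x : M} (hx : e * x * e = e) : ∀ k : ℕ, (e * x) ^ k * e = e := by
  intro k
  induction k with
  | zero => simp
  | succ k ih => rw [pow_succ, mul_assoc, hx]; exact ih

lemma aux_pump_right {e x : M} (hx : e * x * e = e) : ∀ k : ℕ, e * (x * e) ^ k = e := by
  intro k
  induction k with
  | zero => simp
  | succ k ih => rw [pow_succ', ← mul_assoc, ← mul_assoc, hx]; exact ih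

lemma aux_omega_left (Ω : M → M) (hΩ : ∀ x : M, IsOmegaPow x (Ω x))
    {e x : M} (hx : e * x * e = e) : Ω (e * x) * e = e := by
  obtain ⟨⟨n, hn, hxn⟩, _⟩ := hΩ (e * x)
  rw [← hxn]; exact aux_pump_left hx n

lemma aux_omega_right (Ω : M → M) (hΩ : ∀ x : M, IsOmegaPow x (Ω x))
    {e x : M} (hx : e * x * e = e) : e * Ω (x * e) = e := by
  obtain ⟨⟨n, hn, hxn⟩, _⟩ := hΩ (x * e)
  rw [← hxn]; exact aux_pump_right hx n

lemma aux_idem_mul (Ω : M → M) (hΩ : ∀ x : M, IsOmegaPow x (Ω x))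
    {e : M} (he : e * e = e) (x : M) : e * Ω (e * x) = Ω (e * x) := by
  obtain ⟨⟨n, hn, hxn⟩, _⟩ := hΩ (e * x)
  obtain ⟨m, rfl⟩ := Nat.exists_eq_succ_of_ne_zero hn.ne'
  rw [← hxn, pow_succ', ← mul_assoc, ← mul_assoc, he]

lemma aux_mul_idem (Ω : M → M) (hΩ : ∀ x : M, IsOmegaPow x (Ω x))
    {e : M} (he : e * e = e) (x : M) : Ω (x * e) * e = Ω (x * e) := by
  obtain ⟨⟨n, hn, hxn⟩, _⟩ := hΩ (x * e)
  obtain ⟨m, rfl⟩ := Nat.exists_eq_succ_of_ne_zero hn.ne'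
  rw [← hxn, pow_succ, mul_assoc, mul_assoc, he]

/-- key lemma: `ω(ex) * ω(xe) = e` when `exe = e`. -/
lemma aux_keyFF (Ω : M → M) (hΩ : ∀ x : M, IsOmegaPow x (Ω x))
    (hds : ∀ x y : M, Ω (x * y) * Ω (y * x) * Ω (x * y) = Ω (x * y))
    {e x : M} (he : e * e = e) (hx : e * x * e = e) :
    Ω (e * x) * Ω (x * e) = e := by
  have h1 : Ω (e * x) * e = e := aux_omega_left Ω hΩ hx
  have h3 : Ω (x * e) * e = Ω (x * e) := aux_mul_idem Ω hΩ he x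
  have h7 : Ω (e * x) * Ω (x * e) * Ω (e * x) = Ω (e * x) := hds e x
  calc Ω (e * x) * Ω (x * e) = Ω (e * x) * Ω (x * e) * e := by
        rw [mul_assoc, h3]
    _ = Ω (e * x) * Ω (x * e) * (Ω (e * x) * e) := by rw [h1]
    _ = Ω (e * x) * Ω (x * e) * Ω (e * x) * e := by rw [← mul_assoc]
    _ = Ω (e * x) * e := by rw [h7]
    _ = e := h1

/-- sandwich with a square -/
lemma aux_sq (Ω : M → M) (hΩ : ∀ x : M, IsOmegaPow x (Ω x))
    (ha : ∀ x : M, Ω x * x = Ω x)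
    (hds : ∀ x y : M, Ω (x * y) * Ω (y * x) * Ω (x * y) = Ω (x * y))
    {e x : M} (he : e * e = e) (hx : e * x * e = e) : e * (x * x) * e = e := by
  have B1 : Ω (e * x) * (e * x) = e * x := by rw [← mul_assoc, aux_omega_left Ω hΩ hx]
  have B2 : (x * e) * Ω (x * e) = x * e := by rw [mul_assoc, aux_omega_right Ω hΩ hx]
  calc e * (x * x) * e = (e * x) * (x * e) := by simp only [mul_assoc]
    _ = (Ω (e * x) * (e * x)) * ((x * e) * Ω (x * e)) := by rw [B1, B2]
    _ = Ω (e * x) * Ω (x * e) := by rw [ha (e * x), aux_mul_omega Ω hΩ ha (x * e)]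
    _ = e := aux_keyFF Ω hΩ hds he hx

lemma aux_pow2 (Ω : M → M) (hΩ : ∀ x : M, IsOmegaPow x (Ω x))
    (ha : ∀ x : M, Ω x * x = Ω x)
    (hds : ∀ x y : M, Ω (x * y) * Ω (y * x) * Ω (x * y) = Ω (x * y))
    {e : M} (he : e * e = e) :
    ∀ j : ℕ, ∀ x : M, e * x * e = e → e * x ^ (2 ^ j) * e = e := by
  intro j
  induction j with
  | zero => intro x hx; simpa using hx
  | succ j ih =>
      intro x hx
      rw [pow_succ, mul_two, pow_add]
      exact aux_sq Ω hΩ ha hds he (ih x hx)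

lemma aux_sandwich_omega (Ω : M → M) (hΩ : ∀ x : M, IsOmegaPow x (Ω x))
    (ha : ∀ x : M, Ω x * x = Ω x)
    (hds : ∀ x y : M, Ω (x * y) * Ω (y * x) * Ω (x * y) = Ω (x * y))
    {e x : M} (he : e * e = e) (hx : e * x * e = e) : e * Ω x * e = e := by
  obtain ⟨N, hN, hstab⟩ := aux_stab Ω hΩ ha x
  rw [← hstab (2 ^ N) (Nat.le_of_lt Nat.lt_two_pow_self)]
  exact aux_pow2 Ω hΩ ha hds he N x hx

/-- abstract closure lemma : `p*f = e` from sandwich relations -/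
lemma aux_abstract (Ω : M → M) (hΩ : ∀ x : M, IsOmegaPow x (Ω x))
    (ha : ∀ x : M, Ω x * x = Ω x)
    (hds : ∀ x y : M, Ω (x * y) * Ω (y * x) * Ω (x * y) = Ω (x * y))
    {e p f : M} (he : e * e = e) (hpe : p * e = e) (hef : e * f = e)
    (hep : e * p = p) (hfe : f * e = f) : p * f = e := by
  have hea : e * (p * f) = p * f := by rw [← mul_assoc, hep]
  have hae : (p * f) * e = p * f := by rw [mul_assoc, hfe]
  have step2 : e * (f * p) * e = e := by rw [← mul_assoc, hef, hep, hpe]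
  have step3 : e * Ω (f * p) * e = e := aux_sandwich_omega Ω hΩ ha hds he step2
  have key2 : Ω (e * Ω (f * p)) * Ω (Ω (f * p) * e) = e := aux_keyFF Ω hΩ hds he step3
  obtain ⟨Nb, hNb0, hNb⟩ := aux_stab Ω hΩ ha (f * p)
  obtain ⟨Na, hNa0, hNa⟩ := aux_stab Ω hΩ ha (p * f)
  obtain ⟨Na', rfl⟩ := Nat.exists_eq_succ_of_ne_zero hNa0.ne'
  have hK : (f * p) ^ (Nb + Na' + 1) = Ω (f * p) := hNb _ (by omega)
  have hKa : (p * f) ^ (Nb + Na') = Ω (p * f) := hNa _ (by omega)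
  have heapow : e * (p * f) ^ (Nb + Na') = (p * f) ^ (Nb + Na') := by
    obtain ⟨m, hm⟩ : ∃ m, Nb + Na' = m + 1 := ⟨Nb + Na' - 1, by omega⟩
    rw [hm, pow_succ', ← mul_assoc, hea]
  have eωb : e * Ω (f * p) = Ω (p * f) * p := by
    rw [← hK, aux_conj_pow, ← mul_assoc, ← mul_assoc, hef, heapow, hKa]
  obtain ⟨⟨L, hL0, hLpow⟩, _⟩ := hΩ (e * Ω (f * p))
  obtain ⟨L', rfl⟩ := Nat.exists_eq_succ_of_ne_zero hL0.ne'
  have hF' : Ω (e * Ω (f * p)) = Ω (p * f) * ((p * Ω (p * f)) ^ L' * p) := by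
    rw [← hLpow, eωb, aux_conj_pow, mul_assoc]
  have hAX : Ω (p * f) * (((p * Ω (p * f)) ^ L' * p) * Ω (Ω (f * p) * e)) = e := by
    rw [← mul_assoc, ← hF', key2]
  have hAe : Ω (p * f) * e = Ω (p * f) := by
    conv_lhs => rw [← ha (p * f)]
    rw [mul_assoc, hae, ha]
  have hA : Ω (p * f) = e := by
    conv_lhs => rw [← hAe, ← hAX]
    rw [← mul_assoc, (hΩ (p * f)).2, hAX]
  calc p * f = (p * f) * e := hae.symm
    _ = (p * f) * Ω (p * f) := by rw [hA]
    _ = Ω (p * f) := aux_mul_omega Ω hΩ ha (p * f)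
    _ = e := hA

/-- main closure lemma -/
lemma aux_main (Ω : M → M) (hΩ : ∀ x : M, IsOmegaPow x (Ω x))
    (ha : ∀ x : M, Ω x * x = Ω x)
    (hds : ∀ x y : M, Ω (x * y) * Ω (y * x) * Ω (x * y) = Ω (x * y))
    {e v w : M} (he : e * e = e) (hv : e * v * e = e) (hw : e * w * e = e) :
    e * (v * w) * e = e := by
  have B1 : Ω (e * v) * (e * v) = e * v := by rw [← mul_assoc, aux_omega_left Ω hΩ hv]
  have B2 : (w * e) * Ω (w * e) = w * e := by rw [mul_assoc, aux_omega_right Ω hΩ hw]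
  calc e * (v * w) * e = (e * v) * (w * e) := by simp only [mul_assoc]
    _ = (Ω (e * v) * (e * v)) * ((w * e) * Ω (w * e)) := by rw [B1, B2]
    _ = Ω (e * v) * Ω (w * e) := by rw [ha (e * v), aux_mul_omega Ω hΩ ha (w * e)]
    _ = e := aux_abstract Ω hΩ ha hds he (aux_omega_left Ω hΩ hv)
          (aux_omega_right Ω hΩ hw) (aux_idem_mul Ω hΩ he v) (aux_mul_idem Ω hΩ he w)

end Aux

/-- In a finite aperiodic monoid satisfying `(xy)^ω (yx)^ω (xy)^ω = (xy)^ω`, with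
`e = u^ω`: if `ewe = e` then `ew²e = e`, and if `eve = e = ewe` then `evwe = e`. -/
theorem DA_sandwich_closure {M : Type*} [Monoid M] [Finite M] (ω : M → M)
    (hω : ∀ x : M, IsOmegaPow x (ω x))
    (ha : ∀ x : M, ω x * x = ω x)
    (hds : ∀ x y : M, ω (x * y) * ω (y * x) * ω (x * y) = ω (x * y)) :
    ∀ u v w : M,
      (ω u * w * ω u = ω u → ω u * (w * w) * ω u = ω u) ∧
      (ω u * v * ω u = ω u → ω u * w * ω u = ω u → ω u * (v * w) * ω u = ω u) := by
  intro u v w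
  have he : ω u * ω u = ω u := (hω u).2
  exact ⟨fun hw => aux_main ω hω ha hds he hw hw,
         fun hv hw => aux_main ω hω ha hds he hv hw⟩
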